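/- Let a, b : ℝ → ℝ be continuous nonnegative ω-periodic with ā > 0 and b̄ > 0, σ = exp(-āω), G as above, and λ > 0. Suppose f : [0,∞) → [0,∞) is continuous and there exists c₂ > 0 with f(u) ≤ c₂ u for all u ≥ 0. If 0 < λ < (σ⁻¹-1)/(σ⁻¹ c₂ b̄ ω), then the equation x'(t) = -a(t)x(t) + λ b(t) f(x(t-τ(t))) has no positive ω-periodic solution (i.e., no ω-periodic C¹ solution x with x(t) > 0 for all t). -/

import Mathlib

open Real intervalIntegral


/-- Nonexistence of positive periodic solutions for small λ when f is sublinear. -/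
theorem stmt_6 (a b τ f : ℝ → ℝ) (ω abar bbar σ c₂ lam : ℝ)
    (hω : 0 < ω)
    (ha : Continuous a) (hann : ∀ t, 0 ≤ a t) (haper : Function.Periodic a ω)
    (hb : Continuous b) (hbnn : ∀ t, 0 ≤ b t) (hbper : Function.Periodic b ω)
    (hτ : Continuous τ) (hτper : Function.Periodic τ ω)
    (habar : abar = (1 / ω) * ∫ s in (0:ℝ)..ω, a s) (habar_pos : 0 < abar)
    (hbbar : bbar = (1 / ω) * ∫ s in (0:ℝ)..ω, b s) (hbbar_pos : 0 < bbar)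
    (hσ : σ = Real.exp (-abar * ω))
    (hf : ContinuousOn f (Set.Ici 0)) (hfnn : ∀ u ≥ (0:ℝ), 0 ≤ f u)
    (hc₂ : 0 < c₂) (hfle : ∀ u ≥ (0:ℝ), f u ≤ c₂ * u)
    (hlam : 0 < lam) (hlam' : lam < (σ⁻¹ - 1) / (σ⁻¹ * c₂ * bbar * ω)) :
    ¬ ∃ x : ℝ → ℝ, ContDiff ℝ 1 x ∧ Function.Periodic x ω ∧ (∀ t, 0 < x t) ∧
      ∀ t, deriv x t = -a t * x t + lam * (b t * f (x (t - τ t))) := by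
  rintro ⟨x, hx1, hxper, hxpos, hode⟩
  have hxc : Continuous x := hx1.continuous
  have hxd : Differentiable ℝ x := hx1.differentiable one_ne_zero
  -- A = antiderivative of a
  set A : ℝ → ℝ := fun t => ∫ s in (0:ℝ)..t, a s with hAdef
  have hA : ∀ t, HasDerivAt A (a t) t := fun t =>
    integral_hasDerivAt_right (ha.intervalIntegrable 0 t)
      (ha.stronglyMeasurableAtFilter _ _) ha.continuousAt
  have hAc : Continuous A :=
    (Differentiable.continuous fun t => (hA t).differentiableAt :)
  have hAmono : Monotone A :=
    monotone_of_deriv_nonneg (fun t => (hA t).differentiableAt) (by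
      intro t
      rw [(hA t).deriv]; exact hann t)
  have hIa : (∫ s in (0:ℝ)..ω, a s) = abar * ω := by
    rw [habar]; field_simp
  have hIb : (∫ s in (0:ℝ)..ω, b s) = bbar * ω := by
    rw [hbbar]; field_simp
  have hAper : ∀ t, A (t + ω) = A t + abar * ω := by
    intro t
    have h1 : (∫ s in t..t + ω, a s) = ∫ s in (0:ℝ)..0 + ω, a s :=
      haper.intervalIntegral_add_eq t 0
    have h2 : A t + ∫ s in t..t + ω, a s = A (t + ω) :=
      integral_add_adjacent_intervals (ha.intervalIntegrable 0 t) (ha.intervalIntegrable t (t + ω))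
    rw [← h2, h1]
    simp [hAdef, hIa]
  -- maximum of x
  obtain ⟨t₀, ht₀mem, ht₀max⟩ := isCompact_Icc.exists_isMaxOn (s := Set.Icc (0:ℝ) ω)
    ⟨0, Set.left_mem_Icc.2 hω.le⟩ hxc.continuousOn
  set M := x t₀ with hM
  have hMpos : 0 < M := hxpos t₀
  have hxleM : ∀ t, x t ≤ M := by
    intro t
    have hmem := toIcoMod_mem_Ico hω 0 t
    have heq : x (toIcoMod hω 0 t) = x t := by
      rw [toIcoMod]; exact hxper.sub_zsmul_eq _
    calc x t = x (toIcoMod hω 0 t) := heq.symm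
      _ ≤ M := ht₀max (Set.mem_Icc.2 ⟨by simpa using (Set.mem_Ico.1 hmem).1,
          le_of_lt (by simpa using (Set.mem_Ico.1 hmem).2)⟩)
  -- y = x * exp A
  set y : ℝ → ℝ := fun t => x t * Real.exp (A t) with hydef
  set g : ℝ → ℝ := fun t => lam * (b t * f (x (t - τ t))) * Real.exp (A t) with hgdef
  have hy : ∀ t, HasDerivAt y (g t) t := by
    intro t
    have h1 : HasDerivAt (fun t => Real.exp (A t)) (a t * Real.exp (A t)) t := by
      rw [mul_comm]; exact (hA t).exp
    have h2 := (hxd t).hasDerivAt.fun_mul h1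
    have h3 := hode t
    refine h2.congr_deriv ?_
    rw [h3, hgdef]; ring
  have hfx : Continuous fun t => f (x (t - τ t)) :=
    hf.comp_continuous (hxc.comp (continuous_id.sub hτ)) (fun t => (hxpos _).le)
  have hgc : Continuous g := by
    apply Continuous.mul
    · exact continuous_const.mul (hb.mul hfx)
    · exact hAc.rexp
  -- FTC over [t₀, t₀+ω]
  have hftc : (∫ t in t₀..t₀ + ω, g t) = y (t₀ + ω) - y t₀ :=
    integral_eq_sub_of_hasDerivAt (fun t _ => hy t)
      (hgc.intervalIntegrable _ _)
  -- bound the integral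
  set C : ℝ := lam * c₂ * M * Real.exp (A t₀ + abar * ω) with hCdef
  have hbound : (∫ t in t₀..t₀ + ω, g t) ≤ ∫ t in t₀..t₀ + ω, C * b t := by
    apply intervalIntegral.integral_mono_on (by linarith)
      (hgc.intervalIntegrable _ _) ((continuous_const.mul hb).intervalIntegrable _ _)
    intro t ht
    have h1 : f (x (t - τ t)) ≤ c₂ * M :=
      (hfle _ (hxpos _).le).trans (by
        have := hxleM (t - τ t); nlinarith)
    have h2 : Real.exp (A t) ≤ Real.exp (A t₀ + abar * ω) := by
      rw [← hAper t₀]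
      exact Real.exp_le_exp.2 (hAmono ht.2)
    have hfpos : 0 ≤ f (x (t - τ t)) := hfnn _ (hxpos _).le
    have hexp : 0 < Real.exp (A t) := Real.exp_pos _
    calc g t = lam * (b t * f (x (t - τ t))) * Real.exp (A t) := rfl
      _ ≤ lam * (b t * (c₂ * M)) * Real.exp (A t₀ + abar * ω) := by
          apply mul_le_mul
          · exact mul_le_mul_of_nonneg_left (mul_le_mul_of_nonneg_left h1 (hbnn t)) hlam.le
          · exact h2
          · exact hexp.le
          · have := hbnn t; positivity
      _ = C * b t := by rw [hCdef]; ring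
  have hintb : (∫ t in t₀..t₀ + ω, C * b t) = C * (bbar * ω) := by
    rw [intervalIntegral.integral_const_mul, hbper.intervalIntegral_add_eq t₀ 0]
    simp [hIb]
  -- compute LHS
  have hyω : y (t₀ + ω) = M * Real.exp (A t₀) * Real.exp (abar * ω) := by
    rw [hydef]
    simp only [hAper t₀, hxper t₀, Real.exp_add]
    ring
  have hEpos : 0 < Real.exp (A t₀) := Real.exp_pos _
  set K := Real.exp (abar * ω) with hK
  have hK1 : 1 < K := by
    rw [hK]
    calc (1:ℝ) = Real.exp 0 := Real.exp_zero.symm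
      _ < Real.exp (abar * ω) := Real.exp_lt_exp.2 (by positivity)
  -- key inequality
  have hkey : M * Real.exp (A t₀) * K - M * Real.exp (A t₀) ≤ C * (bbar * ω) := by
    rw [← hintb, ← hyω]
    have : y t₀ = M * Real.exp (A t₀) := rfl
    linarith [hftc ▸ hbound]
  have hC : C = lam * c₂ * M * (Real.exp (A t₀) * K) := by
    rw [hCdef, Real.exp_add, hK]
  rw [hC] at hkey
  have hkey2 : K - 1 ≤ lam * c₂ * K * (bbar * ω) := by
    have h := hkey
    have hME : 0 < M * Real.exp (A t₀) := by positivity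
    nlinarith
  -- contradiction with hlam'
  have hσinv : σ⁻¹ = K := by
    rw [hσ, hK, ← Real.exp_neg]
    ring_nf
  rw [hσinv] at hlam'
  have hden : 0 < K * c₂ * bbar * ω := by positivity
  rw [lt_div_iff₀ hden] at hlam'
  nlinarith
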